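/- Let V be a nonempty finite type with n = Fintype.card V and E : Fin m → Sym2 V a multigraph on V. If G is decodable, then n · δ_I(G) < 2m, where δ_I(G) is the minimum incidence degree of G. -/
import Mathlib


/-- `e` is a loop index at vertex `v`. -/
def IsLoopIdx {V : Type*} {m : ℕ} (E : Fin m → Sym2 V) (v : V) (e : Fin m) : Prop :=
  E e = Sym2.diag v

/-- `u` and `v` are connected in the multigraph `E` with the edge indices in `S` deleted. -/
def ConnectedMod {V : Type*} {m : ℕ} (E : Fin m → Sym2 V) (S : Finset (Fin m))
    (u v : V) : Prop :=
  Relation.EqvGen (fun a b => ∃ e : Fin m, e ∉ S ∧ E e = s(a, b)) u v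

/-- `G − S` is decodable: every vertex is connected in `G − S` to a vertex with a loop
outside `S`. -/
def DecodableMod {V : Type*} {m : ℕ} (E : Fin m → Sym2 V) (S : Finset (Fin m)) : Prop :=
  ∀ u : V, ∃ v : V, (∃ e : Fin m, e ∉ S ∧ IsLoopIdx E v e) ∧ ConnectedMod E S u v

def IsDecodable {V : Type*} {m : ℕ} (E : Fin m → Sym2 V) : Prop :=
  DecodableMod E ∅

/-- `c_x^G`: the number of `x`-element sets of edge indices whose deletion leaves a
decodable graph. -/
noncomputable def cG {V : Type*} {m : ℕ} (E : Fin m → Sym2 V) (x : ℕ) : ℕ :=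
  Set.ncard {S : Finset (Fin m) | S.card = x ∧ DecodableMod E S}

/-- `k_x^G = C(m,x) − c_x^G`. -/
noncomputable def kG {V : Type*} {m : ℕ} (E : Fin m → Sym2 V) (x : ℕ) : ℕ :=
  Nat.choose m x - cG E x

/-- `m(G)`: the minimum cardinality of a loop cut. -/
noncomputable def mCut {V : Type*} {m : ℕ} (E : Fin m → Sym2 V) : ℕ :=
  sInf {k : ℕ | ∃ S : Finset (Fin m), S.card = k ∧ ¬ DecodableMod E S}

/-- incidence degree of `v` (a loop at `v` counts once). -/
noncomputable def dI {V : Type*} {m : ℕ} (E : Fin m → Sym2 V) (v : V) : ℕ :=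
  Set.ncard {e : Fin m | v ∈ E e}

/-- `δ_I(G)`: the minimum incidence degree. -/
noncomputable def deltaI {V : Type*} {m : ℕ} (E : Fin m → Sym2 V) : ℕ :=
  sInf (Set.range (dI E))

/-- `L_G`: the number of loop indices. -/
noncomputable def LG {V : Type*} {m : ℕ} (E : Fin m → Sym2 V) : ℕ :=
  Set.ncard {e : Fin m | ∃ v : V, E e = Sym2.diag v}

/-- `δ_ℓ(v)`: the number of loop indices at `v`. -/
noncomputable def loopsAt {V : Type*} {m : ℕ} (E : Fin m → Sym2 V) (v : V) : ℕ :=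
  Set.ncard {e : Fin m | E e = Sym2.diag v}

/-- `Δ_ℓ(G)`: the maximum number of loops at a single vertex. -/
noncomputable def DeltaLoops {V : Type*} {m : ℕ} (E : Fin m → Sym2 V) : ℕ :=
  sSup (Set.range (loopsAt E))

/-- `κ_G`: the edge connectivity. -/
noncomputable def kappaG {V : Type*} {m : ℕ} (E : Fin m → Sym2 V) : ℕ :=
  sInf {k : ℕ | ∃ S : Finset (Fin m), S.card = k ∧ ∃ u v : V, ¬ ConnectedMod E S u v}

theorem stmt5 {V : Type*} [Fintype V] [Nonempty V] {m : ℕ} (E : Fin m → Sym2 V)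
    (hdec : IsDecodable E) :
    Fintype.card V * deltaI E < 2 * m := by
  classical
  obtain ⟨u⟩ := (inferInstance : Nonempty V)
  obtain ⟨v₀, ⟨e₀, -, hloop⟩, -⟩ := hdec u
  have hdI : ∀ v, dI E v = (Finset.univ.filter (fun e => v ∈ E e)).card := by
    intro v
    rw [dI, Set.ncard_eq_toFinset_card']
    congr 1
    ext e; simp
  have h1 : Fintype.card V * deltaI E ≤ ∑ v, dI E v := by
    calc Fintype.card V * deltaI E = ∑ _v : V, deltaI E := by
          simp [Finset.sum_const, mul_comm]
      _ ≤ ∑ v, dI E v := Finset.sum_le_sum fun v _ => Nat.sInf_le ⟨v, rfl⟩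
  have h2 : ∑ v, dI E v = ∑ e : Fin m, (Finset.univ.filter (fun v => v ∈ E e)).card := by
    simp only [hdI, Finset.card_filter]
    rw [Finset.sum_comm]
  have hle : ∀ s : Sym2 V, (Finset.univ.filter (fun v => v ∈ s)).card ≤ 2 := by
    intro s
    induction s using Sym2.ind with
    | _ a b =>
      calc (Finset.univ.filter (fun v => v ∈ s(a, b))).card
          ≤ ({a, b} : Finset V).card := by
            apply Finset.card_le_card
            intro x hx
            simp only [Finset.mem_filter, Sym2.mem_iff] at hx
            simp [hx.2]
        _ ≤ 2 := Finset.card_le_two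
  have hloopcard : (Finset.univ.filter (fun v => v ∈ E e₀)).card = 1 := by
    have : (Finset.univ.filter (fun v => v ∈ E e₀)) = {v₀} := by
      ext x
      rw [IsLoopIdx] at hloop
      simp [hloop, Sym2.diag, Sym2.mem_iff]
    simp [this]
  have h3 : ∑ e : Fin m, (Finset.univ.filter (fun v => v ∈ E e)).card < 2 * m := by
    have := Finset.sum_lt_sum (s := Finset.univ)
      (f := fun e : Fin m => (Finset.univ.filter (fun v => v ∈ E e)).card)
      (g := fun _ => 2)
      (fun e _ => hle (E e))
      ⟨e₀, Finset.mem_univ _, by simp [hloopcard]⟩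
    simpa [mul_comm] using this
  omega
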